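/- Let G be a connected finite simple graph with a split between A and B, let τ be a circle representation of G with induced subwords γ_1, …, γ_{2k}, let ∼ be the equivalence relation on A ∪ B generated by conditions (C1) and (C2), and let Φ be an equivalence class of ∼ whose vertices occur in γ_j. Then the occurrences of the vertices of Φ form a contiguous subword of γ_j; that is, no symbol of γ_j that does not belong to Φ lies between two symbols of Φ in γ_j. -/

import Mathlib

/-- The segment of the word `τ` strictly between the two occurrences of `u`. -/
def betweenOccs {V : Type*} [DecidableEq V] (τ : List V) (u : V) : List V :=
  ((τ.dropWhile (fun x => decide (x ≠ u))).drop 1).takeWhile (fun x => decide (x ≠ u))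

/-- Two symbols `u` and `v` alternate in the circular word `τ` (i.e. their four
occurrences appear in cyclic order `u, v, u, v`): exactly one of the two
occurrences of `v` lies strictly between the two occurrences of `u`. -/
def Alternates {V : Type*} [DecidableEq V] (τ : List V) (u v : V) : Prop :=
  (betweenOccs τ u).count v = 1

/-- `τ` is a circle representation of `G`: a circular word (modelled as a list read
cyclically) in which every vertex occurs exactly twice, and two distinct vertices are
adjacent iff their occurrences alternate. -/
def IsCircleRep {V : Type*} [DecidableEq V] (G : SimpleGraph V) (τ : List V) : Prop :=
  (∀ v : V, τ.count v = 2) ∧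
  ∀ u v : V, u ≠ v → (G.Adj u v ↔ Alternates τ u v)

/-- A split of `G` between `A` and `B`, with short sides `SA = 𝔰(A)` and `SB = 𝔰(B)`:
a partition of the vertices into four parts such that every vertex of `A` is adjacent
to every vertex of `B`, there are no edges between `SA` and `B ∪ SB` nor between
`SB` and `A ∪ SA`, and both sides have at least two vertices. -/
def IsSplit {V : Type*} [DecidableEq V] (G : SimpleGraph V) (A B SA SB : Finset V) : Prop :=
  (∀ v : V, v ∈ A ∪ B ∪ SA ∪ SB) ∧
  Disjoint A B ∧ Disjoint A SA ∧ Disjoint A SB ∧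
  Disjoint B SA ∧ Disjoint B SB ∧ Disjoint SA SB ∧
  (∀ a ∈ A, ∀ b ∈ B, G.Adj a b) ∧
  (∀ s ∈ SA, ∀ x ∈ B ∪ SB, ¬ G.Adj s x) ∧
  (∀ s ∈ SB, ∀ x ∈ A ∪ SA, ¬ G.Adj s x) ∧
  2 ≤ (A ∪ SA).card ∧ 2 ≤ (B ∪ SB).card

/-- The base relation `∼` on `A ∪ B`: `x ∼ y` if `x` and `y` are distinct
non-adjacent vertices of `A ∪ B` (condition (C1)), or if `x` and `y` are connected
by a path with at least one internal vertex, all of whose internal vertices lie in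
`SA ∪ SB = 𝔰(A) ∪ 𝔰(B)` (condition (C2)). -/
def SplitRel {V : Type*} [DecidableEq V] (G : SimpleGraph V) (A B SA SB : Finset V)
    (x y : V) : Prop :=
  x ∈ A ∪ B ∧ y ∈ A ∪ B ∧
  ((x ≠ y ∧ ¬ G.Adj x y) ∨
    ∃ p : G.Walk x y, p.IsPath ∧ 2 ≤ p.length ∧
      ∀ w ∈ p.support, w ≠ x → w ≠ y → w ∈ SA ∪ SB)

/-- `Φ` is an equivalence class of the equivalence relation on `A ∪ B` generated by
the conditions (C1) and (C2). -/
def IsClass {V : Type*} [DecidableEq V] (G : SimpleGraph V) (A B SA SB : Finset V)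
    (Φ : Set V) : Prop :=
  ∃ x, x ∈ A ∪ B ∧
    Φ = {y | y ∈ A ∪ B ∧ Relation.EqvGen (SplitRel G A B SA SB) x y}

set_option linter.unusedSectionVars false
set_option linter.unusedVariables false

namespace CCaux
variable {V : Type*} [DecidableEq V]

lemma dropWhile_ne_append {a : V} {l r : List V} (h : a ∉ l) :
    (l ++ a :: r).dropWhile (fun x => decide (x ≠ a)) = a :: r := by
  induction l with
  | nil => simp [List.dropWhile]
  | cons b t ih =>
    simp only [List.mem_cons, not_or] at h
    simp only [List.cons_append, List.dropWhile_cons]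
    rw [if_pos (by simpa using Ne.symm h.1)]
    exact ih h.2

lemma takeWhile_ne_append {a : V} {l r : List V} (h : a ∉ l) :
    (l ++ a :: r).takeWhile (fun x => decide (x ≠ a)) = l := by
  induction l with
  | nil => simp [List.takeWhile]
  | cons b t ih =>
    simp only [List.mem_cons, not_or] at h
    simp only [List.cons_append, List.takeWhile_cons]
    rw [if_pos (by simpa using Ne.symm h.1)]
    rw [ih h.2]

lemma betweenOccs_spec {a : V} {l₀ l₁ l₂ : List V} (h₀ : a ∉ l₀) (h₁ : a ∉ l₁) :
    betweenOccs (l₀ ++ a :: l₁ ++ a :: l₂) a = l₁ := by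
  unfold betweenOccs
  rw [show l₀ ++ a :: l₁ ++ a :: l₂ = l₀ ++ a :: (l₁ ++ a :: l₂) by simp,
    dropWhile_ne_append h₀]
  simpa using takeWhile_ne_append h₁

lemma count_one_split {a : V} {l : List V} (h : l.count a = 1) :
    ∃ l₀ l₁, l = l₀ ++ a :: l₁ ∧ a ∉ l₀ ∧ a ∉ l₁ := by
  induction l with
  | nil => simp at h
  | cons b t ih =>
    rcases eq_or_ne b a with rfl | hba
    · refine ⟨[], t, rfl, by simp, ?_⟩
      rw [← List.count_eq_zero]
      simpa [List.count_cons] using h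
    · have : t.count a = 1 := by simpa [List.count_cons, hba] using h
      obtain ⟨l₀, l₁, rfl, h₀, h₁⟩ := ih this
      exact ⟨b :: l₀, l₁, rfl, by simp [h₀, Ne.symm hba, hba], h₁⟩

lemma count_two_split {a : V} {l : List V} (h : l.count a = 2) :
    ∃ l₀ l₁ l₂, l = l₀ ++ a :: l₁ ++ a :: l₂ ∧ a ∉ l₀ ∧ a ∉ l₁ ∧ a ∉ l₂ := by
  induction l with
  | nil => simp at h
  | cons b t ih =>
    rcases eq_or_ne b a with hba | hba
    · have : t.count a = 1 := by simpa [List.count_cons, hba] using h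
      obtain ⟨l₁, l₂, rfl, h₁, h₂⟩ := count_one_split this
      exact ⟨[], l₁, l₂, by simp [hba], by simp, h₁, h₂⟩
    · have : t.count a = 2 := by simpa [List.count_cons, hba] using h
      obtain ⟨l₀, l₁, l₂, rfl, h₀, h₁, h₂⟩ := ih this
      exact ⟨b :: l₀, l₁, l₂, rfl, by simp [h₀, hba, Ne.symm hba], h₁, h₂⟩

lemma lift_cons {p : V → Bool} {l L : List V} {a : V}
    (h : l.filter p = a :: L) :
    ∃ t₁ t₂, l = t₁ ++ a :: t₂ ∧ t₁.filter p = [] ∧ t₂.filter p = L := by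
  induction l with
  | nil => simp at h
  | cons b t ih =>
    by_cases hb : p b
    · rw [List.filter_cons_of_pos hb] at h
      obtain ⟨rfl, rfl⟩ : b = a ∧ t.filter p = L := by
        constructor <;> [exact (List.cons.injEq _ _ _ _ ▸ h).1; exact (List.cons.injEq _ _ _ _ ▸ h).2]
      exact ⟨[], t, rfl, rfl, rfl⟩
    · rw [List.filter_cons_of_neg hb] at h
      obtain ⟨t₁, t₂, rfl, h₁, h₂⟩ := ih h
      exact ⟨b :: t₁, t₂, rfl, by simp [List.filter_cons_of_neg hb, h₁], h₂⟩

lemma lift_mid {p : V → Bool} {l L₀ L₁ : List V} {a : V}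
    (h : l.filter p = L₀ ++ a :: L₁) :
    ∃ t₀ t₁, l = t₀ ++ a :: t₁ ∧ t₀.filter p = L₀ ∧ t₁.filter p = L₁ := by
  obtain ⟨u₀, u₁, rfl, hu₀, hu₁⟩ := List.filter_eq_append_iff.1 h
  obtain ⟨w₀, w₁, rfl, hw₀, hw₁⟩ := lift_cons hu₁
  exact ⟨u₀ ++ w₀, w₁, by simp, by simp [hu₀, hw₀], hw₁⟩

lemma lift_concat {p : V → Bool} {l L : List V} {a : V}
    (h : l.filter p = L ++ [a]) :
    ∃ t₀ t₁, l = t₀ ++ a :: t₁ ∧ t₀.filter p = L ∧ t₁.filter p = [] := by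
  obtain ⟨t₀, t₁, rfl, h₀, h₁⟩ := lift_mid (L₁ := []) h
  exact ⟨t₀, t₁, rfl, h₀, h₁⟩


/-- the pair filter -/
def pf (u v : V) : V → Bool := fun w => decide (w = u) || decide (w = v)

lemma filter_pf_eq_replicate {u v : V} {l : List V} (h : u ∉ l) :
    l.filter (pf u v) = List.replicate (l.count v) v := by
  induction l with
  | nil => simp
  | cons b t ih =>
    simp only [List.mem_cons, not_or] at h
    rcases eq_or_ne b v with rfl | hbv
    · rw [List.count_cons_self, List.replicate_succ,
        List.filter_cons_of_pos (by simp [pf]), ih h.2]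
    · rw [List.filter_cons_of_neg (by simp [pf, hbv, Ne.symm h.1]),
        List.count_cons_of_ne hbv, ih h.2]

lemma not_mem_replicate {u v : V} (huv : u ≠ v) (n : ℕ) :
    u ∉ List.replicate n v := by
  intro h
  exact huv (List.eq_of_mem_replicate h)

lemma alternates_iff_filter {W : List V} {u v : V} (huv : u ≠ v)
    (hu : W.count u = 2) (hv : W.count v = 2) :
    Alternates W u v ↔
      (W.filter (pf u v) = [u, v, u, v] ∨ W.filter (pf u v) = [v, u, v, u]) := by
  obtain ⟨l₀, l₁, l₂, rfl, h₀, h₁, h₂⟩ := count_two_split hu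
  have hfil : (l₀ ++ u :: l₁ ++ u :: l₂).filter (pf u v) =
      List.replicate (l₀.count v) v ++ u :: List.replicate (l₁.count v) v
        ++ u :: List.replicate (l₂.count v) v := by
    simp only [List.filter_append, List.filter_cons_of_pos (show pf u v u by simp [pf]),
      filter_pf_eq_replicate h₀, filter_pf_eq_replicate h₁, filter_pf_eq_replicate h₂]
  have hsum : l₀.count v + l₁.count v + l₂.count v = 2 := by
    have := hv
    simp only [List.count_append, List.count_cons, beq_iff_eq, if_neg huv] at this
    omega
  have hbet : Alternates (l₀ ++ u :: l₁ ++ u :: l₂) u v ↔ l₁.count v = 1 := by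
    rw [Alternates, betweenOccs_spec h₀ h₁]
  rw [hbet, hfil]
  constructor
  · intro h1
    have : l₀.count v = 0 ∧ l₂.count v = 1 ∨ l₀.count v = 1 ∧ l₂.count v = 0 := by omega
    rcases this with ⟨h0, h2⟩ | ⟨h0, h2⟩ <;> rw [h0, h2, h1] <;> simp
  · intro h
    have key : ∀ (L : List V), L = List.replicate (l₀.count v) v ++ u ::
        List.replicate (l₁.count v) v ++ u :: List.replicate (l₂.count v) v →
        betweenOccs L u = List.replicate (l₁.count v) v := by
      intro L hL
      rw [hL]
      exact betweenOccs_spec (not_mem_replicate huv _) (not_mem_replicate huv _)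
    rcases h with h | h
    · have h2 := key [u, v, u, v] h.symm
      have : betweenOccs [u, v, u, v] u = [v] :=
        betweenOccs_spec (l₀ := []) (l₁ := [v]) (l₂ := [v]) (by simp) (by simp [huv])
      rw [this] at h2
      have := congrArg List.length h2
      simpa using this.symm
    · have h2 := key [v, u, v, u] h.symm
      have : betweenOccs [v, u, v, u] u = [v] :=
        betweenOccs_spec (l₀ := [v]) (l₁ := [v]) (l₂ := []) (by simp [huv]) (by simp [huv])
      rw [this] at h2
      have := congrArg List.length h2
      simpa using this.symm

lemma isRotated_filter {p : V → Bool} {l l' : List V} (h : l ~r l') :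
    l.filter p ~r l'.filter p := by
  obtain ⟨n, hn, rfl⟩ := List.isRotated_iff_mod.1 h
  rw [List.rotate_eq_drop_append_take hn, List.filter_append]
  conv_lhs => rw [← List.take_append_drop n l, List.filter_append]
  exact List.isRotated_append

lemma alternates_isRotated {W W' : List V} (h : W ~r W') {u v : V} (huv : u ≠ v)
    (hu : W.count u = 2) (hv : W.count v = 2) :
    Alternates W u v ↔ Alternates W' u v := by
  have hu' : W'.count u = 2 := (h.perm.count_eq u).symm ▸ hu
  have hv' : W'.count v = 2 := (h.perm.count_eq v).symm ▸ hv
  rw [alternates_iff_filter huv hu hv, alternates_iff_filter huv hu' hv']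
  have hrot : W.filter (pf u v) ~r W'.filter (pf u v) := isRotated_filter h
  have main : ∀ (L L' : List V), L ~r L' →
      (L = [u,v,u,v] ∨ L = [v,u,v,u]) → (L' = [u,v,u,v] ∨ L' = [v,u,v,u]) := by
    intro L L' hLL' hL
    have h4 : ([u,v,u,v] ~r L') ∨ ([v,u,v,u] ~r L') := by
      rcases hL with rfl | rfl
      · exact Or.inl hLL'
      · exact Or.inr hLL'
    rcases h4 with h4 | h4 <;>
    · obtain ⟨n, hn, hr⟩ := List.isRotated_iff_mod.1 h4
      simp only [List.length_cons, List.length_nil] at hn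
      interval_cases n <;> simp [List.rotate] at hr <;> tauto
  constructor
  · exact main _ _ hrot
  · exact main _ _ hrot.symm

lemma adj_iff_count {G : SimpleGraph V} {τ : List V} (hτ : IsCircleRep G τ)
    {u v : V} (huv : u ≠ v) {X₀ X₁ X₂ : List V}
    (h : (X₀ ++ u :: X₁ ++ u :: X₂) ~r τ) :
    G.Adj u v ↔ X₁.count v = 1 := by
  have hu : (X₀ ++ u :: X₁ ++ u :: X₂).count u = 2 := by
    rw [h.perm.count_eq u]; exact hτ.1 u
  have hv : (X₀ ++ u :: X₁ ++ u :: X₂).count v = 2 := by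
    rw [h.perm.count_eq v]; exact hτ.1 v
  have hnm : u ∉ X₀ ∧ u ∉ X₁ ∧ u ∉ X₂ := by
    have := hu
    simp only [List.count_append, List.count_cons, beq_iff_eq, eq_self_iff_true, if_true] at this
    refine ⟨?_, ?_, ?_⟩ <;> rw [← List.count_eq_zero] <;> omega
  have hAlt : Alternates (X₀ ++ u :: X₁ ++ u :: X₂) u v ↔ X₁.count v = 1 := by
    rw [Alternates, betweenOccs_spec hnm.1 hnm.2.1]
  rw [hτ.2 u v huv, ← hAlt]
  exact (alternates_isRotated h huv hu hv).symm


lemma splitRel_symm {G : SimpleGraph V} {A B SA SB : Finset V} {a b : V}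
    (h : SplitRel G A B SA SB a b) : SplitRel G A B SA SB b a := by
  obtain ⟨ha, hb, h⟩ := h
  refine ⟨hb, ha, ?_⟩
  rcases h with ⟨hne, hnadj⟩ | ⟨p, hp, hl, hint⟩
  · exact Or.inl ⟨hne.symm, fun h' => hnadj h'.symm⟩
  · refine Or.inr ⟨p.reverse, hp.reverse, by simpa using hl, ?_⟩
    intro w hw hwb hwa
    exact hint w (by simpa using hw) hwa hwb

lemma splitRel_swap {G : SimpleGraph V} {A B SA SB : Finset V} {a b : V} :
    SplitRel G A B SA SB a b ↔ SplitRel G B A SB SA a b := by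
  unfold SplitRel
  rw [Finset.union_comm B A, Finset.union_comm SB SA]

lemma isSplit_swap {G : SimpleGraph V} {A B SA SB : Finset V}
    (h : IsSplit G A B SA SB) : IsSplit G B A SB SA := by
  obtain ⟨h1, h2, h3, h4, h5, h6, h7, h8, h9, h10, h11, h12⟩ := h
  refine ⟨fun v => ?_, h2.symm, h6, h5, h4, h3, h7.symm,
    fun b hb a ha => (h8 a ha b hb).symm, h10, h9, h12, h11⟩
  have := h1 v
  simp only [Finset.mem_union] at this ⊢
  tauto

lemma flatten_range_decomp {γ : ℕ → List V} {n j : ℕ} (hj : j < n) :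
    ((List.range n).map γ).flatten =
      ((List.range j).map γ).flatten ++ γ j ++
        ((List.range (n - (j + 1))).map (fun i => γ (j + 1 + i))).flatten := by
  have hn : n = (j + 1) + (n - (j + 1)) := by omega
  conv_lhs => rw [hn]
  rw [List.range_add, List.map_append, List.flatten_append, List.range_succ,
    List.map_append, List.flatten_append, List.map_map]
  simp [Function.comp_def]


lemma internals_in_SA {G : SimpleGraph V} {A SA SB : Finset V}
    (hSBn : ∀ s ∈ SB, ∀ x ∈ A ∪ SA, ¬ G.Adj s x) :
    ∀ (t : List V) (a : V), a ∈ A ∪ SA → List.Chain' G.Adj (a :: t) →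
      (∀ w ∈ t, w ∈ SA ∪ SB) → ∀ w ∈ t, w ∈ SA := by
  intro t
  induction t with
  | nil => intro a _ _ _ w hw; simp at hw
  | cons b t' ih =>
    intro a ha hch hmem w hw
    have hadj : G.Adj a b := (List.isChain_cons_cons.1 hch).1
    have hbSA : b ∈ SA := by
      rcases Finset.mem_union.1 (hmem b (by simp)) with h | h
      · exact h
      · exact absurd hadj.symm (hSBn b h a ha)
    rcases List.mem_cons.1 hw with rfl | hw'
    · exact hbSA
    · exact ih b (Finset.mem_union_right _ hbSA) (List.isChain_cons_cons.1 hch).2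
        (fun w' hw' => hmem w' (by simp [hw'])) w hw'

lemma chain_head_last_mem {α : Type*} {R : α → α → Prop} {Pp : α → Prop} :
    ∀ (t : List α), (∀ a ∈ t, ∀ b ∈ t, R a b → Pp a → Pp b) →
      ∀ (h : t ≠ []), List.Chain' R t → Pp (t.head h) → Pp (t.getLast h) := by
  intro t
  induction t with
  | nil => simp
  | cons a t' ih =>
    intro hstep h hch hP
    cases t' with
    | nil => simpa using hP
    | cons b t'' =>
      have h1 := List.isChain_cons_cons.1 hch
      have h2 := ih (fun a' ha' b' hb' => hstep a' (by simp [ha']) b' (by simp [hb']))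
        (by simp) h1.2
        (hstep a (by simp) b (by simp) h1.1 (by simpa using hP))
      rw [List.getLast_cons (by simp)]
      exact h2

lemma chain_last_head_mem {α : Type*} {R : α → α → Prop} {Pp : α → Prop} :
    ∀ (t : List α), (∀ a ∈ t, ∀ b ∈ t, R a b → Pp b → Pp a) →
      ∀ (h : t ≠ []), List.Chain' R t → Pp (t.getLast h) → Pp (t.head h) := by
  intro t
  induction t with
  | nil => simp
  | cons a t' ih =>
    intro hstep h hch hP
    cases t' with
    | nil => simpa using hP
    | cons b t'' =>
      have h1 := List.isChain_cons_cons.1 hch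
      rw [List.getLast_cons (by simp)] at hP
      have h2 := ih (fun a' ha' b' hb' => hstep a' (by simp [ha']) b' (by simp [hb']))
        (by simp) h1.2 hP
      simp only [List.head_cons]
      exact hstep a (by simp) b (by simp) h1.1 (by simpa using h2)


set_option maxHeartbeats 2000000 in
lemma core (G : SimpleGraph V)
    (A B SA SB : Finset V) (hsplit : IsSplit G A B SA SB)
    (τ : List V) (hτ : IsCircleRep G τ)
    (p q r s bef aft : List V) (x z y : V)
    (hflat : (bef ++ (p ++ x :: q ++ z :: r ++ y :: s) ++ aft) ~r
        τ.filter (fun w => decide (w ∈ A ∪ B)))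
    (hγA : ∀ w ∈ p ++ x :: q ++ z :: r ++ y :: s, w ∈ A)
    (b₁ b₂ : V) (hb₁B : b₁ ∈ B) (hb₂B : b₂ ∈ B)
    (hb₁ : ∃ N₁, aft ++ bef = b₁ :: N₁)
    (hb₂ : ∃ N₂, aft ++ bef = N₂ ++ [b₂])
    (Φ : Set V)
    (hclosed : ∀ a ∈ Φ, ∀ b, SplitRel G A B SA SB a b → b ∈ Φ)
    (hocc : ∀ a ∈ Φ, a ∈ p ++ x :: q ++ z :: r ++ y :: s)
    (hx : x ∈ Φ) (hy : y ∈ Φ)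
    (hxy : Relation.EqvGen (SplitRel G A B SA SB) x y) :
    z ∈ Φ := by
  by_contra hz
  obtain ⟨hcov, hdAB, hdASA, hdASB, hdBSA, hdBSB, hdSASB, hadjAB, hSAn, hSBn, -, -⟩ := hsplit
  set AB : V → Bool := fun w => decide (w ∈ A ∪ B) with hABdef
  have hABtrue : ∀ w ∈ A ∪ B, AB w = true := fun w hw => by
    simp only [hABdef]; exact decide_eq_true hw
  have hcf : ∀ w ∈ A ∪ B, ∀ l : List V, (l.filter AB).count w = l.count w :=
    fun w hw l => List.count_filter (hABtrue w hw)
  have hAnB : ∀ w ∈ A, w ∉ B := fun w hw hw' => (Finset.disjoint_left.1 hdAB) hw hw'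
  have hmemA : ∀ w ∈ A, w ∈ A ∪ B := fun w hw => Finset.mem_union_left _ hw
  have hmemB : ∀ w ∈ B, w ∈ A ∪ B := fun w hw => Finset.mem_union_right _ hw
  have hSAnAB : ∀ w ∈ SA, w ∉ A ∪ B := by
    intro w hw hw'
    rcases Finset.mem_union.1 hw' with h | h
    · exact (Finset.disjoint_right.1 hdASA) hw h
    · exact (Finset.disjoint_right.1 hdBSA) hw h
  have hxγ : x ∈ p ++ x :: q ++ z :: r ++ y :: s := by simp
  have hzγ : z ∈ p ++ x :: q ++ z :: r ++ y :: s := by simp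
  have hyγ : y ∈ p ++ x :: q ++ z :: r ++ y :: s := by simp
  have hzA : z ∈ A := hγA z hzγ
  have hzAB : z ∈ A ∪ B := hmemA z hzA
  have hflatcount : ∀ w ∈ A ∪ B,
      (bef ++ (p ++ x :: q ++ z :: r ++ y :: s) ++ aft).count w = 2 := by
    intro w hw
    rw [hflat.perm.count_eq w, hcf w hw τ]
    exact hτ.1 w
  have houter : ∀ (l m k2 : List V) (w : V),
      (l ++ m ++ k2).count w = l.count w + m.count w + k2.count w := by
    intro l m k2 w; simp [List.count_append]; omega
  -- lift the flattened word to a rotation of τ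
  obtain ⟨n, hn, hrot⟩ := List.isRotated_iff_mod.1 hflat.symm
  obtain ⟨T₁, T₂, hτsplit, hfT₁, hfT₂⟩ :=
    List.filter_eq_append_iff.1 (List.take_append_drop n (τ.filter AB)).symm
  have hτ2rot : (T₂ ++ T₁) ~r τ := by
    rw [hτsplit]; exact List.isRotated_append
  have hfτ2 : (T₂ ++ T₁).filter AB = bef ++ (p ++ x :: q ++ z :: r ++ y :: s) ++ aft := by
    rw [List.filter_append, hfT₁, hfT₂, ← List.rotate_eq_drop_append_take hn, hrot]
  -- once per block
  have hone : ∀ w, (p ++ x :: q ++ z :: r ++ y :: s).count w ≤ 1 := by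
    intro w
    by_contra hw2
    push_neg at hw2
    have hwγ : w ∈ p ++ x :: q ++ z :: r ++ y :: s := List.count_pos_iff.1 (by omega)
    have hwA : w ∈ A := hγA w hwγ
    have hwAB : w ∈ A ∪ B := hmemA w hwA
    have hcnt2 : (p ++ x :: q ++ z :: r ++ y :: s).count w = 2 := by
      have h2 := hflatcount w hwAB
      rw [houter] at h2
      omega
    obtain ⟨m₀, m₁, m₂, hγeq, -, -, -⟩ := count_two_split hcnt2
    have hfil : (T₂ ++ T₁).filter AB = (bef ++ m₀) ++ w :: (m₁ ++ w :: (m₂ ++ aft)) := by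
      rw [hfτ2, hγeq]; simp
    obtain ⟨t₀, t₁, hteq, hft₀, hft₁⟩ := lift_mid hfil
    obtain ⟨u₀, u₁, hueq, hfu₀, hfu₁⟩ := lift_mid hft₁
    have hsh : (t₀ ++ w :: u₀ ++ w :: u₁) ~r τ := by
      rw [show t₀ ++ w :: u₀ ++ w :: u₁ = T₂ ++ T₁ by rw [hteq, hueq]; simp]
      exact hτ2rot
    have hwb₁ : w ≠ b₁ := fun he => hAnB w hwA (he ▸ hb₁B)
    have hadj : G.Adj w b₁ := hadjAB w hwA b₁ hb₁B
    have hcount := (adj_iff_count hτ hwb₁ hsh).1 hadj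
    have hcu₀ : u₀.count b₁ = m₁.count b₁ := by
      rw [← hcf b₁ (hmemB b₁ hb₁B) u₀, hfu₀]
    have hm₁0 : m₁.count b₁ = 0 := by
      have hγ0 : (p ++ x :: q ++ z :: r ++ y :: s).count b₁ = 0 := by
        rw [List.count_eq_zero]
        intro hmem
        exact hAnB b₁ (hγA b₁ hmem) hb₁B
      rw [hγeq] at hγ0
      simp only [List.count_append, List.count_cons, beq_iff_eq] at hγ0
      omega
    rw [hcu₀, hm₁0] at hcount
    exact absurd hcount (by omega)
  -- full structural lift of the blocks
  obtain ⟨TB, R₁, hE1, hfTB, hfR₁⟩ :=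
    List.filter_eq_append_iff.1
      (show (T₂ ++ T₁).filter AB = bef ++ (p ++ x :: (q ++ z :: (r ++ y :: (s ++ aft)))) by
        rw [hfτ2]; simp)
  obtain ⟨Tp, R₂, hE2, hfTp, hfR₂⟩ := lift_mid hfR₁
  obtain ⟨Tq, R₃, hE3, hfTq, hfR₃⟩ := lift_mid hfR₂
  obtain ⟨Tr, R₄, hE4, hfTr, hfR₄⟩ := lift_mid hfR₃
  obtain ⟨Ts, TA, hE5, hfTs, hfTA⟩ := List.filter_eq_append_iff.1 hfR₄
  have hτhat : T₂ ++ T₁ = (TB ++ Tp ++ x :: Tq) ++ (z :: Tr ++ y :: Ts ++ TA) := by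
    rw [hE1, hE2, hE3, hE4, hE5]; simp
  have hW₀ : (z :: Tr ++ y :: Ts ++ (TA ++ TB) ++ Tp ++ x :: Tq) ~r τ := by
    have h1 : ((z :: Tr ++ y :: Ts ++ TA) ++ (TB ++ Tp ++ x :: Tq)) ~r τ :=
      List.IsRotated.trans List.isRotated_append (hτhat ▸ hτ2rot)
    rw [show z :: Tr ++ y :: Ts ++ (TA ++ TB) ++ Tp ++ x :: Tq
        = (z :: Tr ++ y :: Ts ++ TA) ++ (TB ++ Tp ++ x :: Tq) by simp]
    exact h1
  -- locate the second occurrence of z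
  have hcount_z_γ : (p ++ x :: q ++ z :: r ++ y :: s).count z = 1 :=
    le_antisymm (hone z) (List.count_pos_iff.2 hzγ)
  have hTAB_z : (TA ++ TB).count z = 1 := by
    have hta : TA.count z = aft.count z := by rw [← hcf z hzAB TA, hfTA]
    have htb : TB.count z = bef.count z := by rw [← hcf z hzAB TB, hfTB]
    have h2 := hflatcount z hzAB
    simp only [List.count_append, List.count_cons, beq_iff_eq] at h2 hcount_z_γ ⊢
    omega
  obtain ⟨C, D, hCD, hzC, hzD⟩ := count_one_split hTAB_z
  -- locate b₁ and b₂
  obtain ⟨N₁, hN₁⟩ := hb₁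
  obtain ⟨N₂, hN₂⟩ := hb₂
  have hfCD : C.filter AB ++ z :: D.filter AB = aft ++ bef := by
    have h1 : (TA ++ TB).filter AB = aft ++ bef := by
      rw [List.filter_append, hfTA, hfTB]
    rw [← h1, hCD]
    simp [List.filter_append, List.filter_cons_of_pos (hABtrue z hzAB)]
  have hb₁A : b₁ ∉ A := fun h => hAnB b₁ h hb₁B
  have hb₂A : b₂ ∉ A := fun h => hAnB b₂ h hb₂B
  have hzb₁ : z ≠ b₁ := fun he => hb₁A (he ▸ hzA)
  have hzb₂ : z ≠ b₂ := fun he => hb₂A (he ▸ hzA)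
  have hfCD2 : C.filter AB ++ z :: D.filter AB = b₁ :: N₁ := by rw [hfCD, hN₁]
  have hfCb : ∃ L, C.filter AB = b₁ :: L := by
    cases hC : C.filter AB with
    | nil =>
      rw [hC, List.nil_append] at hfCD2
      injection hfCD2 with h1 _
      exact absurd h1 hzb₁
    | cons c cs =>
      rw [hC, List.cons_append] at hfCD2
      injection hfCD2 with h1 _
      exact ⟨cs, by rw [h1]⟩
  obtain ⟨LC, hLC⟩ := hfCb
  obtain ⟨C₁, C₂, hCeq, hfC₁, hfC₂⟩ := lift_cons hLC
  have hfDb : ∃ L, D.filter AB = L ++ [b₂] := by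
    have h3 : C.filter AB ++ z :: D.filter AB = N₂ ++ [b₂] := by rw [hfCD, hN₂]
    rcases List.eq_nil_or_concat (D.filter AB) with hD | ⟨FD, d, hDeq⟩
    · exfalso
      rw [hD] at h3
      have h4 : (C.filter AB ++ [z]).getLast? = (N₂ ++ [b₂]).getLast? := by rw [← h3]
      rw [List.getLast?_concat, List.getLast?_concat] at h4
      injection h4 with h5
      exact hzb₂ h5
    · rw [List.concat_eq_append] at hDeq
      rw [hDeq] at h3
      have h4 : ((C.filter AB ++ z :: FD) ++ [d]).getLast? = (N₂ ++ [b₂]).getLast? := by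
        rw [← h3]; congr 1; simp
      rw [List.getLast?_concat, List.getLast?_concat] at h4
      injection h4 with h5
      rw [h5] at hDeq
      exact ⟨FD, hDeq⟩
  obtain ⟨LD, hLD⟩ := hfDb
  obtain ⟨D₁, D₂, hDeq2, hfD₁, hfD₂⟩ := lift_concat hLD
  -- the master decomposition
  have hWsplit : (([] : List V) ++ z :: ((Tr ++ y :: Ts) ++ (C₁ ++ b₁ :: C₂))
      ++ z :: (D₁ ++ b₂ :: D₂ ++ (Tp ++ x :: Tq))) ~r τ := by
    rw [show (([] : List V) ++ z :: ((Tr ++ y :: Ts) ++ (C₁ ++ b₁ :: C₂))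
        ++ z :: (D₁ ++ b₂ :: D₂ ++ (Tp ++ x :: Tq)))
        = z :: Tr ++ y :: Ts ++ (TA ++ TB) ++ Tp ++ x :: Tq by
      rw [hCD, hCeq, hDeq2]; simp]
    exact hW₀
  -- count dictionary
  have hcTr : ∀ w ∈ A ∪ B, Tr.count w = r.count w := fun w hw => by
    rw [← hcf w hw Tr, hfTr]
  have hcTs : ∀ w ∈ A ∪ B, Ts.count w = s.count w := fun w hw => by
    rw [← hcf w hw Ts, hfTs]
  have hcTp : ∀ w ∈ A ∪ B, Tp.count w = p.count w := fun w hw => by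
    rw [← hcf w hw Tp, hfTp]
  have hcTq : ∀ w ∈ A ∪ B, Tq.count w = q.count w := fun w hw => by
    rw [← hcf w hw Tq, hfTq]
  have hcC₁ : ∀ w ∈ A ∪ B, C₁.count w = 0 := fun w hw => by
    rw [← hcf w hw C₁, hfC₁]; rfl
  have hcD₂ : ∀ w ∈ A ∪ B, D₂.count w = 0 := fun w hw => by
    rw [← hcf w hw D₂, hfD₂]; rfl
  -- total counts in the master word
  have hWc : ∀ w, (([] : List V) ++ z :: ((Tr ++ y :: Ts) ++ (C₁ ++ b₁ :: C₂))
      ++ z :: (D₁ ++ b₂ :: D₂ ++ (Tp ++ x :: Tq))).count w = 2 :=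
    fun w => by rw [hWsplit.perm.count_eq w]; exact hτ.1 w
  -- adjacency with z
  have hADJZ : ∀ w, z ≠ w →
      (G.Adj z w ↔ ((Tr ++ y :: Ts) ++ (C₁ ++ b₁ :: C₂)).count w = 1) :=
    fun w hzw => adj_iff_count hτ hzw hWsplit
  -- facts about the class Φ
  have hΦA : ∀ a ∈ Φ, a ∈ A := fun a ha => hγA a (hocc a ha)
  have hΦAB : ∀ a ∈ Φ, a ∈ A ∪ B := fun a ha => hmemA a (hΦA a ha)
  have hΦz : ∀ a ∈ Φ, z ≠ a := fun a ha he => hz (he ▸ ha)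
  have hΦγ1 : ∀ a ∈ Φ, (p ++ x :: q ++ z :: r ++ y :: s).count a = 1 :=
    fun a ha => le_antisymm (hone a) (List.count_pos_iff.2 (hocc a ha))
  have hadjzΦ : ∀ a ∈ Φ, G.Adj z a := by
    intro a ha
    by_contra hnadj
    exact hz (hclosed a ha z ⟨hΦAB a ha, hzAB,
      Or.inl ⟨fun he => hz (he ▸ ha), fun h => hnadj h.symm⟩⟩)
  have hPΦ : ∀ a ∈ Φ, ((Tr ++ y :: Ts) ++ (C₁ ++ b₁ :: C₂)).count a = 1 :=
    fun a ha => (hADJZ a (hΦz a ha)).1 (hadjzΦ a ha)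
  have hQΦ : ∀ a ∈ Φ, (D₁ ++ b₂ :: D₂ ++ (Tp ++ x :: Tq)).count a = 1 := by
    intro a ha
    have h2 := hWc a
    have hP := hPΦ a ha
    have hza : (if z = a then (1:ℕ) else 0) = 0 := if_neg (hΦz a ha)
    simp only [List.count_append, List.count_cons, beq_iff_eq, List.count_nil,
      List.nil_append] at h2 hP ⊢
    omega
  have hnoC2 : ∀ a ∈ Φ, ∀ (pw : G.Walk z a), pw.IsPath → 2 ≤ pw.length →
      (∀ w ∈ pw.support, w ≠ z → w ≠ a → w ∈ SA ∪ SB) → False := by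
    intro a ha pw h1 h2 h3
    exact hz (hclosed a ha z (splitRel_symm ⟨hzAB, hΦAB a ha, Or.inr ⟨pw, h1, h2, h3⟩⟩))
  -- the barrier chords b₁ and b₂
  have hadjzb₁ : G.Adj z b₁ := hadjAB z hzA b₁ hb₁B
  have hadjzb₂ : G.Adj z b₂ := hadjAB z hzA b₂ hb₂B
  have hPb₁ : ((Tr ++ y :: Ts) ++ (C₁ ++ b₁ :: C₂)).count b₁ = 1 := (hADJZ b₁ hzb₁).1 hadjzb₁
  have hPb₂ : ((Tr ++ y :: Ts) ++ (C₁ ++ b₁ :: C₂)).count b₂ = 1 := (hADJZ b₂ hzb₂).1 hadjzb₂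
  have hQb₁ : (D₁ ++ b₂ :: D₂ ++ (Tp ++ x :: Tq)).count b₁ = 1 := by
    have h2 := hWc b₁
    have hz1 : (if z = b₁ then (1:ℕ) else 0) = 0 := if_neg hzb₁
    simp only [List.count_append, List.count_cons, beq_iff_eq, List.count_nil,
      List.nil_append] at h2 hPb₁ ⊢
    omega
  obtain ⟨pb₀, pb₁', hPsp, -, -⟩ := count_one_split hPb₂
  obtain ⟨qb₀, qb₁', hQsp, -, -⟩ := count_one_split hQb₁
  have hWb₁ : ((z :: ((Tr ++ y :: Ts) ++ C₁)) ++ b₁ :: (C₂ ++ z :: qb₀) ++ b₁ :: qb₁') ~r τ := by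
    have h := hWsplit
    rw [hQsp] at h
    simpa only [List.cons_append, List.append_assoc, List.nil_append] using h
  have hWb₂ : ((z :: pb₀) ++ b₂ :: (pb₁' ++ z :: D₁) ++ b₂ :: (D₂ ++ (Tp ++ x :: Tq))) ~r τ := by
    have h := hWsplit
    rw [hPsp] at h
    simpa only [List.cons_append, List.append_assoc, List.nil_append] using h
  have hBarr1 : ∀ w, b₁ ≠ w → ¬ G.Adj b₁ w → (C₂ ++ z :: qb₀).count w ≠ 1 :=
    fun w hne hnadj hc => hnadj ((adj_iff_count hτ hne hWb₁).2 hc)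
  have hBarr2 : ∀ w, b₂ ≠ w → ¬ G.Adj b₂ w → (pb₁' ++ z :: D₁).count w ≠ 1 :=
    fun w hne hnadj hc => hnadj ((adj_iff_count hτ hne hWb₂).2 hc)
  -- main claim: no base relation between the two sides of z inside the block
  have NOLINK : ∀ u ∈ Φ, ∀ v ∈ Φ, (p ++ x :: q).count u = 1 → (r ++ y :: s).count v = 1 →
      ¬ SplitRel G A B SA SB u v := by
    intro u hu v hv hLu hRv hrel
    have huA := hΦA u hu
    have hvA := hΦA v hv
    have huAB := hΦAB u hu
    have hvAB := hΦAB v hv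
    have hzu : z ≠ u := hΦz u hu
    have hzv : z ≠ v := hΦz v hv
    have hγu := hΦγ1 u hu
    have hγv := hΦγ1 v hv
    have huv : u ≠ v := by
      rintro rfl
      have hizu : (if z = u then (1:ℕ) else 0) = 0 := if_neg hzu
      simp only [List.count_append, List.count_cons, beq_iff_eq] at hγu hLu hRv
      omega
    have hub₁ : b₁ ≠ u := fun he => hb₁A (he ▸ huA)
    have hub₂ : b₂ ≠ u := fun he => hb₂A (he ▸ huA)
    have hvb₁ : b₁ ≠ v := fun he => hb₁A (he ▸ hvA)
    have hvb₂ : b₂ ≠ v := fun he => hb₂A (he ▸ hvA)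
    have hizu : (if z = u then (1:ℕ) else 0) = 0 := if_neg hzu
    have hizv : (if z = v then (1:ℕ) else 0) = 0 := if_neg hzv
    have hibu₁ : (if b₁ = u then (1:ℕ) else 0) = 0 := if_neg hub₁
    have hibu₂ : (if b₂ = u then (1:ℕ) else 0) = 0 := if_neg hub₂
    have hibv₁ : (if b₁ = v then (1:ℕ) else 0) = 0 := if_neg hvb₁
    have hibv₂ : (if b₂ = v then (1:ℕ) else 0) = 0 := if_neg hvb₂
    have hRu : (r ++ y :: s).count u = 0 := by
      simp only [List.count_append, List.count_cons, beq_iff_eq] at hγu hLu ⊢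
      omega
    have hLv : (p ++ x :: q).count v = 0 := by
      simp only [List.count_append, List.count_cons, beq_iff_eq] at hγv hRv ⊢
      omega
    have hPu := hPΦ u hu
    have hQu := hQΦ u hu
    have hPv := hPΦ v hv
    have hQv := hQΦ v hv
    have htru := hcTr u huAB
    have htsu := hcTs u huAB
    have htpu := hcTp u huAB
    have htqu := hcTq u huAB
    have hc₁u := hcC₁ u huAB
    have hd₂u := hcD₂ u huAB
    have htrv := hcTr v hvAB
    have htsv := hcTs v hvAB
    have htpv := hcTp v hvAB
    have htqv := hcTq v hvAB
    have hc₁v := hcC₁ v hvAB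
    have hd₂v := hcD₂ v hvAB
    -- u occurs once in C₂ and once in Tp ++ x :: Tq
    have hcC₂u : C₂.count u = 1 := by
      simp only [List.count_append, List.count_cons, beq_iff_eq] at hPu hRu ⊢
      omega
    have hcTpxu : (Tp ++ x :: Tq).count u = 1 := by
      simp only [List.count_append, List.count_cons, beq_iff_eq] at hLu ⊢
      omega
    have hcD₁u : D₁.count u = 0 := by
      simp only [List.count_append, List.count_cons, beq_iff_eq] at hQu hcTpxu ⊢
      omega
    -- v occurs once in Tr ++ y :: Ts and once in D₁
    have hcTYSv : (Tr ++ y :: Ts).count v = 1 := by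
      simp only [List.count_append, List.count_cons, beq_iff_eq] at hRv ⊢
      omega
    have hcC₂v : C₂.count v = 0 := by
      simp only [List.count_append, List.count_cons, beq_iff_eq] at hPv hcTYSv ⊢
      omega
    have hcTpxv : (Tp ++ x :: Tq).count v = 0 := by
      simp only [List.count_append, List.count_cons, beq_iff_eq] at hLv ⊢
      omega
    have hcD₁v : D₁.count v = 1 := by
      simp only [List.count_append, List.count_cons, beq_iff_eq] at hQv hcTpxv ⊢
      omega
    -- splits at the occurrences of u and v
    obtain ⟨cu₀, cu₁, hCu_sp, -, -⟩ := count_one_split hcC₂u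
    obtain ⟨eu₀, eu₁, hEu_sp, -, -⟩ := count_one_split hcTpxu
    obtain ⟨tv₀, tv₁, hTv_sp, -, -⟩ := count_one_split hcTYSv
    obtain ⟨dv₀, dv₁, hDv_sp, -, -⟩ := count_one_split hcD₁v
    have hWu : ((z :: ((Tr ++ y :: Ts) ++ C₁ ++ b₁ :: cu₀))
        ++ u :: (cu₁ ++ z :: D₁ ++ b₂ :: D₂ ++ eu₀) ++ u :: eu₁) ~r τ := by
      have h := hWsplit
      rw [hCu_sp, hEu_sp] at h
      simpa only [List.cons_append, List.append_assoc, List.nil_append] using h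
    have hWv : ((z :: tv₀) ++ v :: (tv₁ ++ C₁ ++ b₁ :: C₂ ++ z :: dv₀)
        ++ v :: (dv₁ ++ b₂ :: D₂ ++ Tp ++ x :: Tq)) ~r τ := by
      have h := hWsplit
      rw [hTv_sp, hDv_sp] at h
      simpa only [List.cons_append, List.append_assoc, List.nil_append] using h
    have hADJu : ∀ w, u ≠ w →
        (G.Adj u w ↔ (cu₁ ++ z :: D₁ ++ b₂ :: D₂ ++ eu₀).count w = 1) :=
      fun w hne => adj_iff_count hτ hne hWu
    have hADJv : ∀ w, v ≠ w →
        (G.Adj v w ↔ (tv₁ ++ C₁ ++ b₁ :: C₂ ++ z :: dv₀).count w = 1) :=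
      fun w hne => adj_iff_count hτ hne hWv
    obtain ⟨-, -, hC12⟩ := hrel
    rcases hC12 with ⟨-, hnadj⟩ | ⟨pw, hpath, hlen, hint⟩
    · -- condition C1 : but the chords of u and v must cross
      apply hnadj
      rw [hADJu v huv]
      have hiuv : (if u = v then (1:ℕ) else 0) = 0 := if_neg huv
      have e1 : cu₁.count v = 0 := by
        have h5 : C₂.count v = (cu₀ ++ u :: cu₁).count v := by rw [hCu_sp]
        simp only [List.count_append, List.count_cons, beq_iff_eq] at h5
        omega
      have e2 : eu₀.count v = 0 := by
        have h5 : (Tp ++ x :: Tq).count v = (eu₀ ++ u :: eu₁).count v := by rw [hEu_sp]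
        have h6 := hcTpxv
        simp only [List.count_append, List.count_cons, beq_iff_eq] at h5 h6
        omega
      simp only [List.count_append, List.count_cons, beq_iff_eq]
      omega
    · -- condition C2
      have hls : pw.support.length = pw.length + 1 := pw.length_support
      have htlne : pw.support.tail ≠ [] := by
        intro he
        have h1 := congrArg List.length he
        rw [List.length_tail, hls] at h1
        simp only [List.length_nil] at h1
        omega
      rcases List.eq_nil_or_concat pw.support.tail with he | ⟨t, lv, htail⟩
      · exact absurd he htlne
      rw [List.concat_eq_append] at htail
      have hsupp2 : pw.support = (u :: t) ++ [lv] := by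
        rw [pw.support_eq_cons, htail]; simp
      have hlv : lv = v := by
        have h1 : pw.support.getLast? = some v := by
          rw [List.getLast?_eq_getLast pw.support_ne_nil, pw.getLast_support]
        rw [hsupp2, List.getLast?_concat] at h1
        exact Option.some.inj h1
      have hsupp3 : pw.support = u :: (t ++ [v]) := by rw [hsupp2, hlv]; simp
      have hnodup := hpath.support_nodup
      rw [hsupp3] at hnodup
      have hunt : u ∉ t ++ [v] := (List.nodup_cons.1 hnodup).1
      have hndtv : (t ++ [v]).Nodup := (List.nodup_cons.1 hnodup).2
      have hvnt : v ∉ t := fun hvt => (List.disjoint_of_nodup_append hndtv) hvt (by simp)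
      have hchain : List.Chain' G.Adj (u :: (t ++ [v])) := by
        rw [← hsupp3]; exact pw.isChain_adj_support
      have htne2 : t ≠ [] := by
        intro he
        rw [he] at hsupp3
        have h1 := congrArg List.length hsupp3
        rw [hls] at h1
        simp at h1
        omega
      have hintSASB : ∀ w ∈ t, w ∈ SA ∪ SB := by
        intro w hw
        refine hint w (by rw [hsupp3]; simp [hw]) ?_ ?_
        · exact fun he => hunt (List.mem_append_left _ (he ▸ hw))
        · exact fun he => hvnt (he ▸ hw)
      have hchain_ut : List.Chain' G.Adj (u :: t) := by
        have h1 : List.Chain' G.Adj ((u :: t) ++ [v]) := by simpa using hchain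
        exact (List.isChain_append.1 h1).1
      have htSA : ∀ w ∈ t, w ∈ SA :=
        internals_in_SA hSBn t u (Finset.mem_union_left _ huA) hchain_ut hintSASB
      have htAB : ∀ w ∈ t, w ∉ A ∪ B := fun w hw => hSAnAB w (htSA w hw)
      have htz : ∀ w ∈ t, z ≠ w := fun w hw he => htAB w hw (he ▸ hzAB)
      have htb₁ : ∀ w ∈ t, b₁ ≠ w := fun w hw he => htAB w hw (he ▸ hmemB b₁ hb₁B)
      have htb₂ : ∀ w ∈ t, b₂ ≠ w := fun w hw he => htAB w hw (he ▸ hmemB b₂ hb₂B)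
      have htu : ∀ w ∈ t, u ≠ w := fun w hw he => htAB w hw (he ▸ huAB)
      have htv : ∀ w ∈ t, v ≠ w := fun w hw he => htAB w hw (he ▸ hvAB)
      have hnadjb₁ : ∀ w ∈ t, ¬ G.Adj b₁ w := fun w hw ha =>
        hSAn w (htSA w hw) b₁ (Finset.mem_union_left _ hb₁B) ha.symm
      have hnadjb₂ : ∀ w ∈ t, ¬ G.Adj b₂ w := fun w hw ha =>
        hSAn w (htSA w hw) b₂ (Finset.mem_union_left _ hb₂B) ha.symm
      have hnadjz : ∀ w ∈ t, ¬ G.Adj z w := by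
        intro w hw hadjzw
        have hwsup : w ∈ pw.support := by rw [hsupp3]; simp [hw]
        have hzsup : z ∉ pw.support := by
          rw [hsupp3]
          simp only [List.mem_cons, List.mem_append, List.mem_singleton]
          rintro (he | he | he | he)
          · exact hzu he
          · exact htAB z he hzAB
          · exact hzv he
          · exact List.not_mem_nil he
        have hq := hpath.dropUntil hwsup
        have hused : u ∉ (pw.dropUntil w hwsup).support := by
          intro hu2
          have hnd2 := hpath.support_nodup
          rw [← pw.take_spec hwsup, SimpleGraph.Walk.support_append] at hnd2
          have hdisj := List.disjoint_of_nodup_append hnd2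
          have hu1 : u ∈ (pw.takeUntil w hwsup).support := by
            rw [(pw.takeUntil w hwsup).support_eq_cons]; simp
          have hu3 : u ∈ (pw.dropUntil w hwsup).support.tail := by
            have hu4 : u ∈ w :: (pw.dropUntil w hwsup).support.tail := by
              rw [← (pw.dropUntil w hwsup).support_eq_cons]; exact hu2
            rcases List.mem_cons.1 hu4 with he | h
            · exact absurd he (htu w hw)
            · exact h
          exact hdisj hu1 hu3
        have hlq : 1 ≤ (pw.dropUntil w hwsup).length := by
          rcases Nat.eq_zero_or_pos (pw.dropUntil w hwsup).length with h0 | h1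
          · exact absurd (SimpleGraph.Walk.eq_of_length_eq_zero h0).symm (htv w hw)
          · exact h1
        refine hnoC2 v hv (SimpleGraph.Walk.cons hadjzw (pw.dropUntil w hwsup))
          (hq.cons (fun hmem => hzsup (SimpleGraph.Walk.support_dropUntil_subset _ _ hmem)))
          (by rw [SimpleGraph.Walk.length_cons]; omega) ?_
        intro w' hw' hw'z hw'v
        rw [SimpleGraph.Walk.support_cons] at hw'
        rcases List.mem_cons.1 hw' with rfl | hw'2
        · exact absurd rfl hw'z
        · have hw'p : w' ∈ pw.support := SimpleGraph.Walk.support_dropUntil_subset _ _ hw'2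
          have hw'u : w' ≠ u := fun he => hused (he ▸ hw'2)
          rw [hsupp3] at hw'p
          simp only [List.mem_cons, List.mem_append, List.mem_singleton] at hw'p
          rcases hw'p with he | he | he | he
          · exact absurd he hw'u
          · exact Finset.mem_union_left _ (htSA w' he)
          · exact absurd he hw'v
          · exact absurd he List.not_mem_nil
      have htype : ∀ w ∈ t, ((Tr ++ y :: Ts) ++ (C₁ ++ b₁ :: C₂)).count w = 0 ∨
          ((Tr ++ y :: Ts) ++ (C₁ ++ b₁ :: C₂)).count w = 2 := by
        intro w hw
        have h1 : ((Tr ++ y :: Ts) ++ (C₁ ++ b₁ :: C₂)).count w ≠ 1 :=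
          fun hc => hnadjz w hw ((hADJZ w (htz w hw)).2 hc)
        have h2 := hWc w
        have hzw : (if z = w then (1:ℕ) else 0) = 0 := if_neg (htz w hw)
        simp only [List.count_append, List.count_cons, beq_iff_eq, List.count_nil,
          List.nil_append] at h1 h2 ⊢
        omega
      have hstepP : ∀ a ∈ t, ∀ b ∈ t, G.Adj a b → C₂.count a = 2 → C₂.count b = 2 := by
        intro a ha b hb hadj hCa
        obtain ⟨f₀, f₁, f₂, hCsp2, -, -, -⟩ := count_two_split hCa
        have hWa : ((z :: ((Tr ++ y :: Ts) ++ C₁ ++ b₁ :: f₀)) ++ a :: f₁ ++ a ::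
            (f₂ ++ z :: (D₁ ++ b₂ :: D₂ ++ (Tp ++ x :: Tq)))) ~r τ := by
          have h := hWsplit
          rw [hCsp2] at h
          simpa only [List.cons_append, List.append_assoc, List.nil_append] using h
        have h1 : f₁.count b = 1 := (adj_iff_count hτ hadj.ne hWa).1 hadj
        have hCb1 : C₂.count b = (f₀ ++ a :: f₁ ++ a :: f₂).count b := by rw [hCsp2]
        have htypeb := htype b hb
        have hPQb := hWc b
        have hzb : (if z = b then (1:ℕ) else 0) = 0 := if_neg (htz b hb)
        have hb₁b : (if b₁ = b then (1:ℕ) else 0) = 0 := if_neg (htb₁ b hb)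
        have hb₂b : (if b₂ = b then (1:ℕ) else 0) = 0 := if_neg (htb₂ b hb)
        have hQrel : (D₁ ++ b₂ :: D₂ ++ (Tp ++ x :: Tq)).count b
            = (qb₀ ++ b₁ :: qb₁').count b := by rw [hQsp]
        have hbar := hBarr1 b (htb₁ b hb) (hnadjb₁ b hb)
        simp only [List.count_append, List.count_cons, beq_iff_eq, List.count_nil,
          List.nil_append] at htypeb hPQb hQrel hbar hCb1 ⊢
        omega
      have hstepQ : ∀ a ∈ t, ∀ b ∈ t, G.Adj a b → D₁.count b = 2 → D₁.count a = 2 := by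
        intro a ha b hb hadj hDb
        obtain ⟨f₀, f₁, f₂, hDsp2, -, -, -⟩ := count_two_split hDb
        have hWb : ((z :: ((Tr ++ y :: Ts) ++ (C₁ ++ b₁ :: C₂)) ++ z :: f₀)
            ++ b :: f₁ ++ b :: (f₂ ++ b₂ :: D₂ ++ (Tp ++ x :: Tq))) ~r τ := by
          have h := hWsplit
          rw [hDsp2] at h
          simpa only [List.cons_append, List.append_assoc, List.nil_append] using h
        have h1 : f₁.count a = 1 := (adj_iff_count hτ hadj.symm.ne hWb).1 hadj.symm
        have hDa1 : D₁.count a = (f₀ ++ b :: f₁ ++ b :: f₂).count a := by rw [hDsp2]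
        have htypea := htype a ha
        have hPQa := hWc a
        have hza : (if z = a then (1:ℕ) else 0) = 0 := if_neg (htz a ha)
        have hb₂a : (if b₂ = a then (1:ℕ) else 0) = 0 := if_neg (htb₂ a ha)
        have hPrel : ((Tr ++ y :: Ts) ++ (C₁ ++ b₁ :: C₂)).count a
            = (pb₀ ++ b₂ :: pb₁').count a := by rw [hPsp]
        have hbar := hBarr2 a (htb₂ a ha) (hnadjb₂ a ha)
        simp only [List.count_append, List.count_cons, beq_iff_eq, List.count_nil,
          List.nil_append] at htypea hPQa hPrel hbar hDa1 ⊢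
        omega
      have hstepT : ∀ a ∈ t, ∀ b ∈ t, G.Adj a b →
          ((Tr ++ y :: Ts) ++ (C₁ ++ b₁ :: C₂)).count a = 2 →
          ((Tr ++ y :: Ts) ++ (C₁ ++ b₁ :: C₂)).count b = 2 := by
        intro a ha b hb hadj hPa
        obtain ⟨f₀, f₁, f₂, hPsp2, -, -, -⟩ := count_two_split hPa
        have hWa : ((z :: f₀) ++ a :: f₁ ++ a ::
            (f₂ ++ z :: (D₁ ++ b₂ :: D₂ ++ (Tp ++ x :: Tq)))) ~r τ := by
          have h := hWsplit
          rw [hPsp2] at h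
          simpa only [List.cons_append, List.append_assoc, List.nil_append] using h
        have h1 : f₁.count b = 1 := (adj_iff_count hτ hadj.ne hWa).1 hadj
        have hPb1 : ((Tr ++ y :: Ts) ++ (C₁ ++ b₁ :: C₂)).count b
            = (f₀ ++ a :: f₁ ++ a :: f₂).count b := by rw [hPsp2]
        rcases htype b hb with h | h
        · exfalso
          simp only [List.count_append, List.count_cons, beq_iff_eq] at h hPb1
          omega
        · exact h
      have hs₁t : t.head htne2 ∈ t := List.head_mem htne2
      have hsmt : t.getLast htne2 ∈ t := List.getLast_mem htne2
      have hchain_t : List.Chain' G.Adj t := hchain_ut.tail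
      have hadj_u_s1 : G.Adj u (t.head htne2) :=
        (List.isChain_cons.1 hchain_ut).1 (t.head htne2) (by rw [List.head?_eq_head htne2]; rfl)
      have hadj_sm_v : G.Adj (t.getLast htne2) v := by
        have h1 : List.Chain' G.Adj ((u :: t) ++ [v]) := by simpa using hchain
        refine (List.isChain_append.1 h1).2.2 (t.getLast htne2) ?_ v (by simp)
        rw [List.getLast?_eq_getLast (by simp : (u :: t) ≠ []), List.getLast_cons htne2]
        rfl
      have hs1cnt := (hADJu (t.head htne2) (htu _ hs₁t)).1 hadj_u_s1
      have hsmcnt := (hADJv (t.getLast htne2) (htv _ hsmt)).1 hadj_sm_v.symm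
      rcases htype _ hs₁t with hT0 | hT2
      · -- s₁ is a Q-chord
        have hsmT0 : ((Tr ++ y :: Ts) ++ (C₁ ++ b₁ :: C₂)).count (t.getLast htne2) = 0 := by
          rcases htype _ hsmt with h | h
          · exact h
          · exfalso
            have h2 := chain_last_head_mem t
              (fun a ha b hb hr hPb => hstepT b hb a ha hr.symm hPb) htne2 hchain_t h
            omega
        have hsmD : D₁.count (t.getLast htne2) = 2 := by
          have h5 : (Tr ++ y :: Ts).count (t.getLast htne2)
              = (tv₀ ++ v :: tv₁).count (t.getLast htne2) := by rw [hTv_sp]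
          have h6 : D₁.count (t.getLast htne2)
              = (dv₀ ++ v :: dv₁).count (t.getLast htne2) := by rw [hDv_sp]
          have hzsm : (if z = t.getLast htne2 then (1:ℕ) else 0) = 0 := if_neg (htz _ hsmt)
          have hvsm : (if v = t.getLast htne2 then (1:ℕ) else 0) = 0 := if_neg (htv _ hsmt)
          have hbar := hBarr2 (t.getLast htne2) (htb₂ _ hsmt) (hnadjb₂ _ hsmt)
          have hPrel : ((Tr ++ y :: Ts) ++ (C₁ ++ b₁ :: C₂)).count (t.getLast htne2)
              = (pb₀ ++ b₂ :: pb₁').count (t.getLast htne2) := by rw [hPsp]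
          have hPQ := hWc (t.getLast htne2)
          simp only [List.count_append, List.count_cons, beq_iff_eq, List.count_nil,
            List.nil_append] at hsmcnt hsmT0 h5 h6 hbar hPrel hPQ ⊢
          omega
        have hs1D : D₁.count (t.head htne2) = 2 :=
          chain_last_head_mem t hstepQ htne2 hchain_t hsmD
        have hzs1 : (if z = t.head htne2 then (1:ℕ) else 0) = 0 := if_neg (htz _ hs₁t)
        simp only [List.count_append, List.count_cons, beq_iff_eq] at hs1cnt
        omega
      · -- s₁ is a P-chord
        have hs1C₂ : C₂.count (t.head htne2) = 2 := by
          have h5 : C₂.count (t.head htne2) = (cu₀ ++ u :: cu₁).count (t.head htne2) := by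
            rw [hCu_sp]
          have h6 : (Tp ++ x :: Tq).count (t.head htne2)
              = (eu₀ ++ u :: eu₁).count (t.head htne2) := by rw [hEu_sp]
          have hQrel : (D₁ ++ b₂ :: D₂ ++ (Tp ++ x :: Tq)).count (t.head htne2)
              = (qb₀ ++ b₁ :: qb₁').count (t.head htne2) := by rw [hQsp]
          have hbar := hBarr1 (t.head htne2) (htb₁ _ hs₁t) (hnadjb₁ _ hs₁t)
          have hPQ := hWc (t.head htne2)
          have hzs : (if z = t.head htne2 then (1:ℕ) else 0) = 0 := if_neg (htz _ hs₁t)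
          have hb₁s : (if b₁ = t.head htne2 then (1:ℕ) else 0) = 0 := if_neg (htb₁ _ hs₁t)
          have hb₂s : (if b₂ = t.head htne2 then (1:ℕ) else 0) = 0 := if_neg (htb₂ _ hs₁t)
          have hus : (if u = t.head htne2 then (1:ℕ) else 0) = 0 := if_neg (htu _ hs₁t)
          simp only [List.count_append, List.count_cons, beq_iff_eq, List.count_nil,
            List.nil_append] at hs1cnt hT2 h5 h6 hQrel hbar hPQ ⊢
          omega
        have hsmC₂ : C₂.count (t.getLast htne2) = 2 :=
          chain_head_last_mem t hstepP htne2 hchain_t hs1C₂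
        have hzsm : (if z = t.getLast htne2 then (1:ℕ) else 0) = 0 := if_neg (htz _ hsmt)
        simp only [List.count_append, List.count_cons, beq_iff_eq] at hsmcnt
        omega
  -- propagate along the equivalence chain
  have key : ∀ a b, Relation.EqvGen (SplitRel G A B SA SB) a b →
      ((a ∈ Φ ↔ b ∈ Φ) ∧
        (a ∈ Φ → ((p ++ x :: q).count a = 1 ↔ (p ++ x :: q).count b = 1))) := by
    intro a b h
    induction h with
    | rel a b hab =>
      have hmem : a ∈ Φ ↔ b ∈ Φ :=
        ⟨fun ha => hclosed a ha b hab, fun hb => hclosed b hb a (splitRel_symm hab)⟩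
      refine ⟨hmem, fun ha => ?_⟩
      have hb := hmem.1 ha
      have hγa := hΦγ1 a ha
      have hγb := hΦγ1 b hb
      have hiza : (if z = a then (1:ℕ) else 0) = 0 := if_neg (hΦz a ha)
      have hizb : (if z = b then (1:ℕ) else 0) = 0 := if_neg (hΦz b hb)
      constructor
      · intro hLa
        by_contra hnLb
        have hRb : (r ++ y :: s).count b = 1 := by
          simp only [List.count_append, List.count_cons, beq_iff_eq] at hγb hnLb ⊢
          omega
        exact NOLINK a ha b hb hLa hRb hab
      · intro hLb
        by_contra hnLa
        have hRa : (r ++ y :: s).count a = 1 := by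
          simp only [List.count_append, List.count_cons, beq_iff_eq] at hγa hnLa ⊢
          omega
        exact NOLINK b hb a ha hLb hRa (splitRel_symm hab)
    | refl a => exact ⟨Iff.rfl, fun _ => Iff.rfl⟩
    | symm a b h ih => exact ⟨ih.1.symm, fun hb => (ih.2 (ih.1.2 hb)).symm⟩
    | trans a b c h1 h2 ih1 ih2 =>
      exact ⟨ih1.1.trans ih2.1, fun ha => (ih1.2 ha).trans (ih2.2 (ih1.1.1 ha))⟩
  have hLx : (p ++ x :: q).count x = 1 := by
    have h1 := hΦγ1 x hx
    have hizx : (if z = x then (1:ℕ) else 0) = 0 := if_neg (hΦz x hx)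
    simp only [List.count_append, List.count_cons, beq_iff_eq, eq_self_iff_true, if_true]
      at h1 ⊢
    omega
  have hLy : (p ++ x :: q).count y = 1 := ((key x y hxy).2 hx).1 hLx
  have h1 := hΦγ1 y hy
  have hizy : (if z = y then (1:ℕ) else 0) = 0 := if_neg (hΦz y hy)
  simp only [List.count_append, List.count_cons, beq_iff_eq, eq_self_iff_true, if_true]
    at h1 hLy
  omega


end CCaux

set_option maxHeartbeats 1000000 in
/-- The occurrences of the vertices of an equivalence class `Φ` of `∼` form a
contiguous subword of `γ j`: no symbol of `γ j` that does not belong to `Φ` lies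
between two symbols of `Φ` in `γ j`. -/
theorem class_contiguous_in_subword
    {V : Type*} [DecidableEq V] [Fintype V]
    (G : SimpleGraph V) (hconn : G.Connected)
    (A B SA SB : Finset V) (hsplit : IsSplit G A B SA SB)
    (τ : List V) (hτ : IsCircleRep G τ)
    (k : ℕ) (γ : ℕ → List V)
    (hjoin : ((List.range (2 * k)).map γ).flatten ~r
      τ.filter (fun x => decide (x ∈ A ∪ B)))
    (hne : ∀ i < 2 * k, γ i ≠ [])
    (hAword : ∀ i < 2 * k, i % 2 = 0 → ∀ x ∈ γ i, x ∈ A)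
    (hBword : ∀ i < 2 * k, i % 2 = 1 → ∀ x ∈ γ i, x ∈ B)
    (Φ : Set V) (hΦ : IsClass G A B SA SB Φ)
    (j : ℕ) (hj : j < 2 * k) (hocc : ∀ x ∈ Φ, x ∈ γ j) :
    ∀ (p q r s : List V) (x z y : V),
      γ j = p ++ x :: q ++ z :: r ++ y :: s → x ∈ Φ → y ∈ Φ → z ∈ Φ := by
  intro p q r s x z y hγj hxΦ hyΦ
  obtain ⟨x₀, hx₀AB, hΦeq⟩ := hΦ
  have hΦmem : ∀ a, a ∈ Φ ↔ (a ∈ A ∪ B ∧ Relation.EqvGen (SplitRel G A B SA SB) x₀ a) := by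
    intro a
    rw [hΦeq]
    simp only [Set.mem_setOf_eq]
  have hclosed : ∀ a ∈ Φ, ∀ b, SplitRel G A B SA SB a b → b ∈ Φ := by
    intro a ha b hab
    rw [hΦmem] at ha ⊢
    exact ⟨hab.2.1, Relation.EqvGen.trans _ _ _ ha.2 (Relation.EqvGen.rel a b hab)⟩
  have hxy : Relation.EqvGen (SplitRel G A B SA SB) x y := by
    have h1 := (hΦmem x).1 hxΦ
    have h2 := (hΦmem y).1 hyΦ
    exact Relation.EqvGen.trans _ _ _ (Relation.EqvGen.symm _ _ h1.2) h2.2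
  have hocc2 : ∀ a ∈ Φ, a ∈ p ++ x :: q ++ z :: r ++ y :: s := by
    rw [← hγj]; exact hocc
  have hdec := CCaux.flatten_range_decomp (γ := γ) (n := 2*k) hj
  set bef := ((List.range j).map γ).flatten with hbef
  set aft := ((List.range (2*k - (j+1))).map (fun i => γ (j+1+i))).flatten with haftdef
  have hflat2 : (bef ++ (p ++ x :: q ++ z :: r ++ y :: s) ++ aft) ~r
      τ.filter (fun w => decide (w ∈ A ∪ B)) := by
    rw [← hγj]
    rw [hdec] at hjoin
    exact hjoin
  -- head of aft ++ bef
  have hheadex : ∃ b N, aft ++ bef = b :: N ∧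
      ((j+1 < 2*k ∧ b ∈ γ (j+1)) ∨ (j+1 = 2*k ∧ b ∈ γ 0)) := by
    rcases Nat.lt_or_ge (j+1) (2*k) with hlt | hge
    · have haft2 : aft = γ (j+1) ++
          ((List.range (2*k-(j+1)-1)).map (fun i => γ (j+1+(i+1)))).flatten := by
        rw [haftdef]
        conv_lhs => rw [show 2*k-(j+1) = (2*k-(j+1)-1)+1 from by omega]
        rw [List.range_succ_eq_map]
        simp [List.map_map, Function.comp_def, Nat.succ_eq_add_one]
      obtain ⟨c, cs, hcs⟩ := List.exists_cons_of_ne_nil (hne (j+1) hlt)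
      exact ⟨c, cs ++ ((List.range (2*k-(j+1)-1)).map (fun i => γ (j+1+(i+1)))).flatten ++ bef,
        by rw [haft2, hcs]; simp, Or.inl ⟨hlt, by rw [hcs]; simp⟩⟩
    · have hj1 : j + 1 = 2*k := by omega
      have haft0 : aft = [] := by
        rw [haftdef, show 2*k-(j+1) = 0 from by omega]
        simp
      have hjge : 1 ≤ j := by omega
      have hbef2 : bef = γ 0 ++ ((List.range (j-1)).map (fun i => γ (i+1))).flatten := by
        rw [hbef]
        conv_lhs => rw [show j = (j-1)+1 from by omega]
        rw [List.range_succ_eq_map]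
        simp [List.map_map, Function.comp_def, Nat.succ_eq_add_one]
      obtain ⟨c, cs, hcs⟩ := List.exists_cons_of_ne_nil (hne 0 (by omega))
      exact ⟨c, cs ++ ((List.range (j-1)).map (fun i => γ (i+1))).flatten,
        by rw [haft0, hbef2, hcs]; simp, Or.inr ⟨hj1, by rw [hcs]; simp⟩⟩
  -- last of aft ++ bef
  have hlastex : ∃ b N, aft ++ bef = N ++ [b] ∧
      ((1 ≤ j ∧ b ∈ γ (j-1)) ∨ (j = 0 ∧ b ∈ γ (2*k-1))) := by
    rcases Nat.eq_zero_or_pos j with hj0 | hjpos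
    · have hbef0 : bef = [] := by rw [hbef, hj0]; simp
      have hm : 1 ≤ 2*k - (j+1) := by omega
      have haft2 : aft = ((List.range (2*k-(j+1)-1)).map (fun i => γ (j+1+i))).flatten
          ++ γ (j+1+(2*k-(j+1)-1)) := by
        rw [haftdef]
        conv_lhs => rw [show 2*k-(j+1) = (2*k-(j+1)-1)+1 from by omega]
        rw [List.range_succ]
        simp
      rcases List.eq_nil_or_concat (γ (j+1+(2*k-(j+1)-1))) with hnil | ⟨L, b, hLb⟩
      · exact absurd hnil (hne _ (by omega))
      · rw [List.concat_eq_append] at hLb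
        refine ⟨b, ((List.range (2*k-(j+1)-1)).map (fun i => γ (j+1+i))).flatten ++ L,
          by rw [hbef0, haft2, hLb]; simp, Or.inr ⟨hj0, ?_⟩⟩
        have : j+1+(2*k-(j+1)-1) = 2*k-1 := by omega
        rw [← this, hLb]
        simp
    · have hbef2 : bef = ((List.range (j-1)).map γ).flatten ++ γ (j-1) := by
        rw [hbef]
        conv_lhs => rw [show j = (j-1)+1 from by omega]
        rw [List.range_succ]
        simp
      rcases List.eq_nil_or_concat (γ (j-1)) with hnil | ⟨L, b, hLb⟩
      · exact absurd hnil (hne _ (by omega))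
      · rw [List.concat_eq_append] at hLb
        exact ⟨b, aft ++ (((List.range (j-1)).map γ).flatten ++ L),
          by rw [hbef2, hLb]; simp, Or.inl ⟨hjpos, by rw [hLb]; simp⟩⟩
  obtain ⟨b₁, N₁, hN₁, hb₁loc⟩ := hheadex
  obtain ⟨b₂, N₂, hN₂, hb₂loc⟩ := hlastex
  rcases Nat.mod_two_eq_zero_or_one j with hpar | hpar
  · -- γ j is an A–block
    have hγA : ∀ w ∈ p ++ x :: q ++ z :: r ++ y :: s, w ∈ A := by
      rw [← hγj]; exact hAword j hj hpar
    have hb₁B : b₁ ∈ B := by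
      rcases hb₁loc with ⟨hlt, hmem⟩ | ⟨heq, hmem⟩
      · exact hBword (j+1) hlt (by omega) b₁ hmem
      · exact absurd heq (by omega)
    have hb₂B : b₂ ∈ B := by
      rcases hb₂loc with ⟨hge, hmem⟩ | ⟨heq, hmem⟩
      · exact hBword (j-1) (by omega) (by omega) b₂ hmem
      · exact hBword (2*k-1) (by omega) (by omega) b₂ hmem
    exact CCaux.core G A B SA SB hsplit τ hτ p q r s bef aft x z y hflat2 hγA
      b₁ b₂ hb₁B hb₂B ⟨N₁, hN₁⟩ ⟨N₂, hN₂⟩ Φ hclosed hocc2 hxΦ hyΦ hxy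
  · -- γ j is a B–block : swap the roles of the two sides
    have hγB : ∀ w ∈ p ++ x :: q ++ z :: r ++ y :: s, w ∈ B := by
      rw [← hγj]; exact hBword j hj hpar
    have hb₁A : b₁ ∈ A := by
      rcases hb₁loc with ⟨hlt, hmem⟩ | ⟨heq, hmem⟩
      · exact hAword (j+1) hlt (by omega) b₁ hmem
      · exact hAword 0 (by omega) (by omega) b₁ hmem
    have hb₂A : b₂ ∈ A := by
      rcases hb₂loc with ⟨hge, hmem⟩ | ⟨heq, hmem⟩
      · exact hAword (j-1) (by omega) (by omega) b₂ hmem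
      · exact absurd heq (by omega)
    have hfun : (fun w => decide (w ∈ B ∪ A)) = (fun w => decide (w ∈ A ∪ B)) := by
      funext w
      rw [decide_eq_decide, Finset.union_comm]
    have hflat3 : (bef ++ (p ++ x :: q ++ z :: r ++ y :: s) ++ aft) ~r
        τ.filter (fun w => decide (w ∈ B ∪ A)) := by
      rw [hfun]; exact hflat2
    have hclosed' : ∀ a ∈ Φ, ∀ b, SplitRel G B A SB SA a b → b ∈ Φ :=
      fun a ha b hab => hclosed a ha b (CCaux.splitRel_swap.2 hab)
    have hxy' : Relation.EqvGen (SplitRel G B A SB SA) x y :=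
      Relation.EqvGen.mono (r := SplitRel G A B SA SB) (p := SplitRel G B A SB SA)
        (fun a b h => CCaux.splitRel_swap.1 h) x y hxy
    exact CCaux.core G B A SB SA (CCaux.isSplit_swap hsplit) τ hτ p q r s bef aft x z y
      hflat3 hγB b₁ b₂ hb₁A hb₂A ⟨N₁, hN₁⟩ ⟨N₂, hN₂⟩ Φ hclosed' hocc2 hxΦ hyΦ hxy'
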